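/- Let Ω ⊂ {(s,t) : 0 < t ≤ t_max} be convex, f(s,t) = s − √t, let (s*, t*) minimize f over Ω, and let (s_k, t_k) ∈ Ω satisfy f(s_k, t_k) − f(s*, t*) ≤ ε for some ε ≥ 0. Then |√t_k − √t*| ≤ √(2 ε √t_max). -/

import Mathlib

theorem sqrt_t_convergence (tmax ε : ℝ) (hε : 0 ≤ ε)
    (Ω : Set (ℝ × ℝ)) (hΩ : Convex ℝ Ω)
    (hsub : Ω ⊆ {p : ℝ × ℝ | 0 < p.2 ∧ p.2 ≤ tmax})
    (pstar pk : ℝ × ℝ) (hstar : pstar ∈ Ω) (hk : pk ∈ Ω)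
    (hmin : ∀ p ∈ Ω, pstar.1 - Real.sqrt pstar.2 ≤ p.1 - Real.sqrt p.2)
    (hgap : (pk.1 - Real.sqrt pk.2) - (pstar.1 - Real.sqrt pstar.2) ≤ ε) :
    |Real.sqrt pk.2 - Real.sqrt pstar.2| ≤ Real.sqrt (2 * ε * Real.sqrt tmax) := by
  obtain ⟨hts, htsmax⟩ := hsub hstar
  obtain ⟨htk, htkmax⟩ := hsub hk
  set s₀ := pstar.1
  set t₀ := pstar.2
  set sk := pk.1
  set tk := pk.2
  set b := Real.sqrt t₀ with hb
  set a := Real.sqrt tk with ha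
  have hb0 : 0 < b := Real.sqrt_pos.mpr hts
  have ha0 : 0 ≤ a := Real.sqrt_nonneg _
  have hbsq : b ^ 2 = t₀ := Real.sq_sqrt hts.le
  have hasq : a ^ 2 = tk := Real.sq_sqrt htk.le
  -- Step 1: linearized optimality  (tk - t₀)/(2b) ≤ sk - s₀
  have key : (tk - t₀) / (b + b) ≤ sk - s₀ := by
    have hev : ∀ l ∈ Set.Ioc (0:ℝ) 1,
        (tk - t₀) / (Real.sqrt (t₀ + l * (tk - t₀)) + b) ≤ sk - s₀ := by
      intro l hl
      obtain ⟨hl0, hl1⟩ := hl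
      have hmem : ((1 - l) • pstar + l • pk) ∈ Ω :=
        hΩ hstar hk (by linarith) hl0.le (by ring)
      have htl : 0 < ((1 - l) • pstar + l • pk).2 := (hsub hmem).1
      have h2 : ((1 - l) • pstar + l • pk).2 = t₀ + l * (tk - t₀) := by
        simp [Prod.smul_def, smul_eq_mul]; ring
      have h1 : ((1 - l) • pstar + l • pk).1 = s₀ + l * (sk - s₀) := by
        simp [Prod.smul_def, smul_eq_mul]; ring
      have hm := hmin _ hmem
      rw [h2] at hm htl
      -- √(t₀ + l(tk-t₀)) - b = l(tk-t₀)/(√(t₀+l(tk-t₀)) + b)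
      have hden : 0 < Real.sqrt (t₀ + l * (tk - t₀)) + b :=
        by positivity
      have hsq : (Real.sqrt (t₀ + l * (tk - t₀))) ^ 2 = t₀ + l * (tk - t₀) :=
        Real.sq_sqrt htl.le
      have hdiff : Real.sqrt (t₀ + l * (tk - t₀)) - b
          = l * (tk - t₀) / (Real.sqrt (t₀ + l * (tk - t₀)) + b) := by
        field_simp
        nlinarith [hsq, hbsq]
      have hle : Real.sqrt (t₀ + l * (tk - t₀)) - b ≤ l * (sk - s₀) := by
        linarith
      rw [hdiff] at hle
      rw [div_le_iff₀ hden] at hle ⊢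
      have := (mul_le_mul_iff_right₀ hl0).mp (by linarith [hle] : l * (tk - t₀) ≤ l * ((sk - s₀) * (Real.sqrt (t₀ + l * (tk - t₀)) + b)))
      linarith
    have htend : Filter.Tendsto
        (fun l : ℝ => (tk - t₀) / (Real.sqrt (t₀ + l * (tk - t₀)) + b))
        (nhdsWithin 0 (Set.Ioi 0)) (nhds ((tk - t₀) / (b + b))) := by
      have hc : Filter.Tendsto
          (fun l : ℝ => (tk - t₀) / (Real.sqrt (t₀ + l * (tk - t₀)) + b))
          (nhds 0) (nhds ((tk - t₀) / (Real.sqrt (t₀ + 0 * (tk - t₀)) + b))) := by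
        apply Filter.Tendsto.div tendsto_const_nhds
        · exact ((Real.continuous_sqrt.comp (by continuity)).add continuous_const).tendsto 0
        · simp [hb]
          positivity
      simpa [hb] using hc.mono_left nhdsWithin_le_nhds
    have hev' : ∀ᶠ l in nhdsWithin (0:ℝ) (Set.Ioi 0),
        (tk - t₀) / (Real.sqrt (t₀ + l * (tk - t₀)) + b) ≤ sk - s₀ := by
      filter_upwards [Ioc_mem_nhdsGT_of_mem ⟨le_refl (0:ℝ), one_pos⟩] with l hl
      exact hev l hl
    exact le_of_tendsto htend hev'
  -- Step 2: algebra
  have hsq2 : (a - b) ^ 2 ≤ 2 * ε * Real.sqrt tmax := by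
    have h1 : (tk - t₀) / (b + b) ≤ sk - s₀ := key
    have h2 : tk - t₀ ≤ 2 * b * (sk - s₀) := by
      rw [div_le_iff₀ (by positivity)] at h1; nlinarith
    have h3 : (a - b) ^ 2 ≤ 2 * b * ε := by
      nlinarith [hgap, hasq, hbsq]
    have hbmax : b ≤ Real.sqrt tmax := Real.sqrt_le_sqrt htsmax
    nlinarith [Real.sqrt_nonneg tmax]
  exact Real.abs_le_sqrt hsq2
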